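/- Let J : V → V be a linear isometry with J ∘ J = −id, and for a subspace X ⊆ V let X^ω := (J X)^⊥ denote its ω-orthogonal complement. Then for all subspaces X, Y of V with X ≠ {0}, Y ≠ {0}, X ≠ V and Y ≠ V, one has ∠_M(X, Y) = ∠_M(Y^ω, X^ω). -/

import Mathlib

open scoped RealInnerProductSpace

/-- The angle `∠(x,y) = arccos(|⟨x,y⟩|/(‖x‖‖y‖)) ∈ [0,π/2]` between two vectors. -/
noncomputable def ang {V : Type*} [NormedAddCommGroup V] [InnerProductSpace ℝ V]
    (x y : V) : ℝ :=
  Real.arccos (|(inner ℝ x y : ℝ)| / (‖x‖ * ‖y‖))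

/-- The angle `∠_M(X,y) = inf{∠(x,y) : 0 ≠ x ∈ X}` between a subspace and a vector. -/
noncomputable def angMv {V : Type*} [NormedAddCommGroup V] [InnerProductSpace ℝ V]
    (X : Submodule ℝ V) (y : V) : ℝ :=
  sInf ((fun x => ang x y) '' {x : V | x ∈ X ∧ x ≠ 0})

/-- The maximal angle `∠_M(X,Y) = sup{∠_M(X,y) : 0 ≠ y ∈ Y}` between two subspaces. -/
noncomputable def angMM {V : Type*} [NormedAddCommGroup V] [InnerProductSpace ℝ V]
    (X Y : Submodule ℝ V) : ℝ :=
  sSup ((fun y => angMv X y) '' {y : V | y ∈ Y ∧ y ≠ 0})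

section Aux

variable {V : Type*} [NormedAddCommGroup V] [InnerProductSpace ℝ V] [FiniteDimensional ℝ V]

private lemma arccos_le_arccos' {s t : ℝ} (h : s ≤ t) : Real.arccos t ≤ Real.arccos s := by
  simp only [Real.arccos_eq_pi_div_two_sub_arcsin]
  linarith [Real.monotone_arcsin h]

/-- The ratio function whose sup/inf we study. -/
noncomputable def projRatio (K : Submodule ℝ V) (y : V) : ℝ :=
  ‖(Submodule.orthogonalProjection K y : V)‖ / ‖y‖

lemma projRatio_nonneg (K : Submodule ℝ V) (y : V) : 0 ≤ projRatio K y := by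
  unfold projRatio; positivity

lemma projRatio_le_one (K : Submodule ℝ V) (y : V) : projRatio K y ≤ 1 := by
  rcases eq_or_ne y 0 with rfl | hy
  · simp [projRatio]
  have hpyth := Submodule.norm_sq_eq_add_norm_sq_projection y K
  have hy0 : (0:ℝ) < ‖y‖ := norm_pos_iff.mpr hy
  have h1 : ‖(Submodule.orthogonalProjection K y : V)‖ ≤ ‖y‖ := by
    have e1 : ‖(Submodule.orthogonalProjection K y : V)‖ = ‖Submodule.orthogonalProjection K y‖ := rfl
    rw [e1]
    nlinarith [norm_nonneg (Submodule.orthogonalProjection Kᗮ y), norm_nonneg (Submodule.orthogonalProjection K y)]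
  unfold projRatio
  rw [div_le_one hy0]
  exact h1

lemma angMv_eq (X : Submodule ℝ V) (hX : X ≠ ⊥) {y : V} (hy : y ≠ 0) :
    angMv X y = Real.arcsin (projRatio Xᗮ y) := by
  set P : V := (Submodule.orthogonalProjection X y : V) with hPdef
  set Q : V := (Submodule.orthogonalProjection Xᗮ y : V) with hQdef
  have hPQ : P + Q = y := Submodule.starProjection_add_starProjection_orthogonal (K := X) y
  have hy0 : (0:ℝ) < ‖y‖ := norm_pos_iff.mpr hy
  have hpyth : ‖y‖^2 = ‖P‖^2 + ‖Q‖^2 := Submodule.norm_sq_eq_add_norm_sq_projection y X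
  have hQmem : Q ∈ Xᗮ := (Submodule.orthogonalProjection Xᗮ y).2
  have hPmem : P ∈ X := (Submodule.orthogonalProjection X y).2
  have hinner_eq : ∀ x ∈ X, (inner ℝ x y : ℝ) = inner ℝ x P := by
    intro x hx
    have h1 : (inner ℝ x Q : ℝ) = 0 := (Submodule.mem_orthogonal X Q).mp hQmem x hx
    have : (inner ℝ x y : ℝ) = inner ℝ x (P + Q) := by rw [hPQ]
    rw [this, inner_add_right, h1, add_zero]
  have key : angMv X y = Real.arccos (‖P‖ / ‖y‖) := by
    apply IsLeast.csInf_eq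
    constructor
    · -- membership
      rcases eq_or_ne P 0 with hP | hP
      · obtain ⟨x, hxX, hx0⟩ := Submodule.exists_mem_ne_zero_of_ne_bot hX
        refine ⟨x, ⟨hxX, hx0⟩, ?_⟩
        have h2 : (inner ℝ x y : ℝ) = 0 := by rw [hinner_eq x hxX, hP, inner_zero_right]
        simp [ang, h2, hP]
      · refine ⟨P, ⟨hPmem, hP⟩, ?_⟩
        have hPy : (inner ℝ P y : ℝ) = ‖P‖ * ‖P‖ := by
          rw [hinner_eq P hPmem, real_inner_self_eq_norm_mul_norm]
        have hP0 : (0:ℝ) < ‖P‖ := norm_pos_iff.mpr hP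
        show ang P y = Real.arccos (‖P‖ / ‖y‖)
        unfold ang
        rw [hPy]
        congr 1
        rw [abs_of_nonneg (by positivity)]
        field_simp
    · rintro a ⟨x, ⟨hxX, hx0⟩, rfl⟩
      apply arccos_le_arccos'
      have hx0' : (0:ℝ) < ‖x‖ := norm_pos_iff.mpr hx0
      have hcs : |(inner ℝ x y : ℝ)| ≤ ‖x‖ * ‖P‖ := by
        rw [hinner_eq x hxX]
        exact abs_real_inner_le_norm x P
      rw [div_le_div_iff₀ (by positivity) hy0]
      nlinarith [hcs, norm_nonneg P]
  rw [key, Real.arccos_eq_arcsin (by positivity)]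
  congr 1
  have h1 : 1 - (‖P‖ / ‖y‖) ^ 2 = (‖Q‖ / ‖y‖) ^ 2 := by
    field_simp
    nlinarith
  rw [h1, Real.sqrt_sq (by positivity)]
  rfl

lemma angMM_eq (X Y : Submodule ℝ V) (hX : X ≠ ⊥) (hY : Y ≠ ⊥) :
    angMM X Y = Real.arcsin (sSup (projRatio Xᗮ '' {y : V | y ∈ Y ∧ y ≠ 0})) := by
  obtain ⟨y₀, hy₀Y, hy₀0⟩ := Submodule.exists_mem_ne_zero_of_ne_bot hY
  have hne : (projRatio Xᗮ '' {y : V | y ∈ Y ∧ y ≠ 0}).Nonempty :=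
    ⟨_, ⟨y₀, ⟨hy₀Y, hy₀0⟩, rfl⟩⟩
  have hbdd : BddAbove (projRatio Xᗮ '' {y : V | y ∈ Y ∧ y ≠ 0}) := by
    refine ⟨1, ?_⟩
    rintro a ⟨y, _, rfl⟩
    exact projRatio_le_one _ _
  have himg : (fun y => angMv X y) '' {y : V | y ∈ Y ∧ y ≠ 0}
      = Real.arcsin '' (projRatio Xᗮ '' {y : V | y ∈ Y ∧ y ≠ 0}) := by
    rw [← Set.image_comp]
    exact Set.image_congr fun y hy => angMv_eq X hX hy.2
  unfold angMM
  rw [himg,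
    ← Real.monotone_arcsin.map_csSup_of_continuousAt Real.continuous_arcsin.continuousAt hne hbdd]

lemma dual_le (A B : Submodule ℝ V) (hA : A ≠ ⊥) (hB : B ≠ ⊥) :
    sSup (projRatio A '' {y : V | y ∈ B ∧ y ≠ 0}) ≤
    sSup (projRatio B '' {u : V | u ∈ A ∧ u ≠ 0}) := by
  obtain ⟨u₀, hu₀A, hu₀0⟩ := Submodule.exists_mem_ne_zero_of_ne_bot hA
  obtain ⟨y₀, hy₀B, hy₀0⟩ := Submodule.exists_mem_ne_zero_of_ne_bot hB
  have hbddR : BddAbove (projRatio B '' {u : V | u ∈ A ∧ u ≠ 0}) := by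
    refine ⟨1, ?_⟩
    rintro a ⟨u, _, rfl⟩
    exact projRatio_le_one _ _
  have hR0 : (0:ℝ) ≤ sSup (projRatio B '' {u : V | u ∈ A ∧ u ≠ 0}) :=
    le_trans (projRatio_nonneg B u₀) (le_csSup hbddR ⟨u₀, ⟨hu₀A, hu₀0⟩, rfl⟩)
  refine csSup_le ⟨_, ⟨y₀, ⟨hy₀B, hy₀0⟩, rfl⟩⟩ ?_
  rintro a ⟨y, ⟨hyB, hy0⟩, rfl⟩
  rcases eq_or_ne (Submodule.orthogonalProjection A y : V) 0 with hP | hP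
  · unfold projRatio
    rw [hP]
    simp only [norm_zero, zero_div]; exact hR0
  · set u : V := (Submodule.orthogonalProjection A y : V) with hudef
    have huA : u ∈ A := (Submodule.orthogonalProjection A y).2
    have hu0 : (0:ℝ) < ‖u‖ := norm_pos_iff.mpr hP
    have hy0' : (0:ℝ) < ‖y‖ := norm_pos_iff.mpr hy0
    have h1 : (inner ℝ u y : ℝ) = ‖u‖ * ‖u‖ := by
      have hyQ : y - u ∈ Aᗮ := Submodule.sub_starProjection_mem_orthogonal y
      have h2 : (inner ℝ u (y - u) : ℝ) = 0 := (Submodule.mem_orthogonal A _).mp hyQ u huA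
      have : (inner ℝ u y : ℝ) = inner ℝ u (y - u) + inner ℝ u u := by
        rw [← inner_add_right]; congr 1; abel
      rw [this, h2, zero_add, real_inner_self_eq_norm_mul_norm]
    have h2 : (inner ℝ u y : ℝ) = inner ℝ (Submodule.orthogonalProjection B u : V) y := by
      have hsub : u - (Submodule.orthogonalProjection B u : V) ∈ Bᗮ :=
        Submodule.sub_starProjection_mem_orthogonal u
      have h3 : (inner ℝ y (u - (Submodule.orthogonalProjection B u : V)) : ℝ) = 0 :=
        (Submodule.mem_orthogonal B _).mp hsub y hyB
      have h4 : (inner ℝ (u - (Submodule.orthogonalProjection B u : V)) y : ℝ) = 0 := by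
        rw [real_inner_comm]; exact h3
      have : (inner ℝ u y : ℝ) = inner ℝ (u - (Submodule.orthogonalProjection B u : V)) y
          + inner ℝ (Submodule.orthogonalProjection B u : V) y := by
        rw [← inner_add_left]; congr 1; abel
      rw [this, h4, zero_add]
    have h5 : ‖u‖ * ‖u‖ ≤ ‖(Submodule.orthogonalProjection B u : V)‖ * ‖y‖ := by
      rw [← h1, h2]
      exact real_inner_le_norm _ _
    have h6 : projRatio A y ≤ projRatio B u := by
      unfold projRatio
      rw [← hudef, div_le_div_iff₀ hy0' hu0]
      nlinarith
    exact h6.trans (le_csSup hbddR ⟨u, ⟨huA, hP⟩, rfl⟩)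

variable (J : V →ₗ[ℝ] V)

lemma inner_J (hiso : ∀ x : V, ‖J x‖ = ‖x‖) (x y : V) :
    (inner ℝ (J x) (J y) : ℝ) = inner ℝ x y := by
  rw [real_inner_eq_norm_add_mul_self_sub_norm_mul_self_sub_norm_mul_self_div_two,
    real_inner_eq_norm_add_mul_self_sub_norm_mul_self_sub_norm_mul_self_div_two x y,
    ← map_add, hiso, hiso, hiso]

lemma J_inj (hiso : ∀ x : V, ‖J x‖ = ‖x‖) : Function.Injective J := by
  intro a b h
  have : ‖a - b‖ = 0 := by rw [← hiso, map_sub, h, sub_self, norm_zero]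
  rwa [norm_eq_zero, sub_eq_zero] at this

lemma J_surj (hsq : ∀ x : V, J (J x) = -x) : Function.Surjective J := fun x =>
  ⟨-(J x), by rw [map_neg, hsq, neg_neg]⟩

lemma map_orthogonal (hiso : ∀ x : V, ‖J x‖ = ‖x‖) (hsq : ∀ x : V, J (J x) = -x)
    (X : Submodule ℝ V) : (X.map J)ᗮ = Xᗮ.map J := by
  ext u
  obtain ⟨w, rfl⟩ := J_surj J hsq u
  simp only [Submodule.mem_orthogonal, Submodule.mem_map]
  constructor
  · intro h
    refine ⟨w, fun x hx => ?_, rfl⟩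
    have := h (J x) ⟨x, hx, rfl⟩
    rwa [inner_J J hiso] at this
  · rintro ⟨w', hw', hww⟩ v ⟨x, hx, rfl⟩
    obtain rfl : w' = w := J_inj J hiso hww
    rw [inner_J J hiso]
    exact hw' x hx

lemma norm_proj_J (hiso : ∀ x : V, ‖J x‖ = ‖x‖) (K : Submodule ℝ V) (w : V) :
    ‖(Submodule.orthogonalProjection (K.map J) (J w) : V)‖ = ‖(Submodule.orthogonalProjection K w : V)‖ := by
  have h : (Submodule.orthogonalProjection (K.map J) (J w) : V) = J (Submodule.orthogonalProjection K w : V) := by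
    apply Submodule.eq_starProjection_of_mem_of_inner_eq_zero
    · exact ⟨_, (Submodule.orthogonalProjection K w).2, rfl⟩
    · rintro v ⟨x, hx, rfl⟩
      rw [← map_sub, inner_J J hiso]
      exact Submodule.starProjection_inner_eq_zero w x hx
  rw [h, hiso]

lemma projRatio_J (hiso : ∀ x : V, ‖J x‖ = ‖x‖) (K : Submodule ℝ V) (w : V) :
    projRatio (K.map J) (J w) = projRatio K w := by
  unfold projRatio
  rw [norm_proj_J J hiso, hiso]

end Aux

theorem stmt8 {V : Type*} [NormedAddCommGroup V] [InnerProductSpace ℝ V]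
    [FiniteDimensional ℝ V]
    (J : V →ₗ[ℝ] V) (hiso : ∀ x : V, ‖J x‖ = ‖x‖) (hsq : ∀ x : V, J (J x) = -x)
    (X Y : Submodule ℝ V) (hX0 : X ≠ ⊥) (hY0 : Y ≠ ⊥) (hXT : X ≠ ⊤) (hYT : Y ≠ ⊤) :
    angMM X Y = angMM ((Y.map J)ᗮ) ((X.map J)ᗮ) := by
  have hJinj := J_inj J hiso
  have hJsurj := J_surj J hsq
  -- X map J is not top, etc.
  have hmap_ne_top : ∀ Z : Submodule ℝ V, Z ≠ ⊤ → Z.map J ≠ ⊤ := by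
    intro Z hZ h
    apply hZ
    rw [eq_top_iff]
    intro v _
    have : J v ∈ Z.map J := by rw [h]; trivial
    obtain ⟨z, hz, hzv⟩ := this
    obtain rfl : z = v := hJinj hzv
    exact hz
  have hmap_ne_bot : ∀ Z : Submodule ℝ V, Z ≠ ⊥ → Z.map J ≠ ⊥ := by
    intro Z hZ h
    apply hZ
    obtain ⟨z, hz, hz0⟩ := Submodule.exists_mem_ne_zero_of_ne_bot hZ
    exfalso
    apply hz0
    have : J z ∈ Z.map J := ⟨z, hz, rfl⟩
    rw [h, Submodule.mem_bot] at this
    have : J z = J 0 := by rw [this, map_zero]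
    exact hJinj this
  have hXoT : Xᗮ ≠ ⊥ := fun h => hXT (Submodule.orthogonal_eq_bot_iff.mp h)
  have hYmapT : (Y.map J)ᗮ ≠ ⊥ := fun h =>
    hmap_ne_top Y hYT (Submodule.orthogonal_eq_bot_iff.mp h)
  have hXmapT : (X.map J)ᗮ ≠ ⊥ := fun h =>
    hmap_ne_top X hXT (Submodule.orthogonal_eq_bot_iff.mp h)
  rw [angMM_eq X Y hX0 hY0, angMM_eq _ _ hYmapT hXmapT]
  congr 1
  rw [Submodule.orthogonal_orthogonal]
  -- set equality transform via J
  have himg : projRatio (Y.map J) '' {u : V | u ∈ (X.map J)ᗮ ∧ u ≠ 0}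
      = projRatio Y '' {w : V | w ∈ Xᗮ ∧ w ≠ 0} := by
    rw [map_orthogonal J hiso hsq]
    ext a
    constructor
    · rintro ⟨u, ⟨⟨w, hw, rfl⟩, hu0⟩, rfl⟩
      have hw0 : w ≠ 0 := by rintro rfl; simp at hu0
      exact ⟨w, ⟨hw, hw0⟩, (projRatio_J J hiso Y w).symm⟩
    · rintro ⟨w, ⟨hw, hw0⟩, rfl⟩
      refine ⟨J w, ⟨⟨w, hw, rfl⟩, ?_⟩, projRatio_J J hiso Y w⟩
      intro h
      exact hw0 (hJinj (h.trans (map_zero J).symm))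
  rw [himg]
  exact le_antisymm (dual_le Xᗮ Y hXoT hY0) (dual_le Y Xᗮ hY0 hXoT)
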